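/- Let n ≥ 1 be an integer and β ≥ n − 1/2, and define δ(r) = 1/(1 + β r^(n−1) Γ(r)) for r ≥ 1 with Γ as usual. Then the function r ↦ −(β − (n−1)/r)·δ(r)² is increasing on [1, ∞). Consequently, if (β² − β(n−1)/R)·δ(R)² = γ² for some R ≥ 1 and γ > 0, then (β² − β(n−1)/r)·δ(r)² ≤ γ² for all r ≥ R. -/

import Mathlib

set_option maxHeartbeats 1000000

noncomputable def Gam1 (n : ℕ) (r : ℝ) : ℝ :=
  if n = 1 then r - 1
  else if n = 2 then Real.log r
  else (1 / ((n : ℝ) - 2)) * (1 - r ^ ((2 : ℝ) - (n : ℝ)))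

noncomputable def del1 (n : ℕ) (β r : ℝ) : ℝ :=
  1 / (1 + β * r ^ ((n : ℝ) - 1) * Gam1 n r)

lemma gam1_hasDerivAt (n : ℕ) {r : ℝ} (hr : 0 < r) :
    HasDerivAt (Gam1 n) (r ^ ((1:ℝ) - n)) r := by
  rcases eq_or_ne n 1 with h1 | h1
  · subst h1
    have he : Gam1 1 = fun x : ℝ => x - 1 := by funext x; simp [Gam1]
    rw [he]
    have h : HasDerivAt (fun x : ℝ => x - 1) 1 r := (hasDerivAt_id r).sub_const 1
    have e : r ^ ((1:ℝ) - (1:ℕ)) = 1 := by norm_num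
    rw [e]; exact h
  rcases eq_or_ne n 2 with h2 | h2
  · subst h2
    have he : Gam1 2 = Real.log := by funext x; simp [Gam1]
    rw [he]
    have h := Real.hasDerivAt_log hr.ne'
    have e : r ^ ((1:ℝ) - (2:ℕ)) = r⁻¹ := by
      rw [show (1:ℝ) - ((2:ℕ):ℝ) = -1 by norm_num, Real.rpow_neg_one]
    rw [e]; exact h
  · have he : Gam1 n = fun x : ℝ => (1 / ((n : ℝ) - 2)) * (1 - x ^ ((2:ℝ) - n)) := by
      funext x; simp [Gam1, h1, h2]
    rw [he]
    have hn2 : (n:ℝ) - 2 ≠ 0 := by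
      have h : (n:ℝ) ≠ 2 := by exact_mod_cast h2
      intro hh; apply h; linarith
    have hp : HasDerivAt (fun x : ℝ => x ^ ((2:ℝ) - n))
        (((2:ℝ) - n) * r ^ ((2:ℝ) - n - 1)) r :=
      Real.hasDerivAt_rpow_const (Or.inl hr.ne')
    have h := ((hasDerivAt_const r (1:ℝ)).sub hp).const_mul (1 / ((n : ℝ) - 2))
    refine h.congr_deriv ?_
    rw [show (2:ℝ) - n - 1 = 1 - n by ring]
    field_simp
    ring

lemma gam1_nonneg (n : ℕ) {r : ℝ} (hr : 1 ≤ r) : 0 ≤ Gam1 n r := by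
  have hr0 : (0:ℝ) < r := lt_of_lt_of_le one_pos hr
  unfold Gam1
  split_ifs with h1 h2
  · linarith
  · exact Real.log_nonneg hr
  · rcases lt_or_ge (n:ℝ) 2 with h | h
    · have hn2 : n < 2 := by exact_mod_cast h
      have hn0 : n = 0 := by omega
      subst hn0
      have e : r ^ ((2:ℝ) - (0:ℕ)) = r ^ (2:ℕ) := by
        rw [show (2:ℝ) - ((0:ℕ):ℝ) = ((2:ℕ):ℝ) by norm_num, Real.rpow_natCast]
      rw [e]
      have h2' : (1:ℝ) ≤ r ^ (2:ℕ) := by nlinarith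
      simp only [Nat.cast_zero]
      nlinarith
    · have hne : (n:ℝ) ≠ 2 := by exact_mod_cast h2
      have h' : (2:ℝ) < n := lt_of_le_of_ne h (Ne.symm hne)
      have hle1 : r ^ ((2:ℝ) - n) ≤ 1 :=
        Real.rpow_le_one_of_one_le_of_nonpos hr (by linarith)
      have hpos : (0:ℝ) < 1 / ((n:ℝ) - 2) := by
        apply div_pos one_pos; linarith
      nlinarith

theorem stmt_15 (n : ℕ) (hn : 1 ≤ n) (β γ : ℝ) (hβ : (n : ℝ) - 1 / 2 ≤ β) (hγ : 0 < γ) :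
    StrictMonoOn (fun r : ℝ => -(β - ((n : ℝ) - 1) / r) * del1 n β r ^ 2) (Set.Ici 1) ∧
      ∀ R : ℝ, 1 ≤ R →
        (β ^ 2 - β * ((n : ℝ) - 1) / R) * del1 n β R ^ 2 = γ ^ 2 →
        ∀ r : ℝ, R ≤ r →
          (β ^ 2 - β * ((n : ℝ) - 1) / r) * del1 n β r ^ 2 ≤ γ ^ 2 := by
  have hn1 : (1:ℝ) ≤ n := by exact_mod_cast hn
  have hβ0 : (0:ℝ) < β := by linarith
  set c : ℝ := (n:ℝ) - 1 with hc
  have hc0 : 0 ≤ c := by rw [hc]; linarith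
  have hβc : c + 1/2 ≤ β := by rw [hc]; linarith
  have hd_pos : ∀ r : ℝ, 1 ≤ r → 0 < 1 + β * r ^ ((n:ℝ)-1) * Gam1 n r := by
    intro r hr
    have hr0 : (0:ℝ) < r := by linarith
    have hG := gam1_nonneg n hr
    have hp : (0:ℝ) ≤ r ^ ((n:ℝ)-1) := (Real.rpow_pos_of_pos hr0 _).le
    nlinarith [mul_nonneg (mul_nonneg hβ0.le hp) hG]
  have hfun : (fun x : ℝ => -(β - c/x) * del1 n β x ^ 2)
      = fun x : ℝ => (c/x - β) / (1 + β * x ^ ((n:ℝ)-1) * Gam1 n x) ^ 2 := by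
    funext x
    simp only [del1, div_pow, one_pow]
    rw [mul_one_div, neg_sub]
  have key : ∀ r : ℝ, 1 ≤ r → ∃ v : ℝ, 0 < v ∧
      HasDerivAt (fun x : ℝ => -(β - c/x) * del1 n β x ^ 2) v r := by
    intro r hr
    have hr0 : (0:ℝ) < r := by linarith
    have hrne : r ≠ 0 := hr0.ne'
    have hG : HasDerivAt (Gam1 n) (r ^ ((1:ℝ) - n)) r := gam1_hasDerivAt n hr0
    have hP : HasDerivAt (fun x : ℝ => x ^ ((n:ℝ)-1)) (((n:ℝ)-1) * r ^ ((n:ℝ)-1-1)) r :=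
      Real.hasDerivAt_rpow_const (Or.inl hr0.ne')
    have e1 : r ^ ((n:ℝ)-1-1) = r ^ ((n:ℝ)-2) := by
      rw [show (n:ℝ)-1-1 = (n:ℝ)-2 by ring]
    have e2 : r ^ ((n:ℝ)-1) * r ^ ((1:ℝ)-n) = 1 := by
      rw [← Real.rpow_add hr0]; norm_num
    have ePA : r ^ ((n:ℝ)-1) = r ^ ((n:ℝ)-2) * r := by
      rw [show (n:ℝ)-1 = ((n:ℝ)-2) + 1 by ring, Real.rpow_add hr0, Real.rpow_one]
    set A : ℝ := r ^ ((n:ℝ)-2) with hA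
    set G : ℝ := Gam1 n r with hGdef
    have hA0 : (0:ℝ) < A := Real.rpow_pos_of_pos hr0 _
    have hG0 : 0 ≤ G := gam1_nonneg n hr
    have hmul : HasDerivAt (fun x : ℝ => x ^ ((n:ℝ)-1) * Gam1 n x)
        (c * A * G + 1) r := by
      have h := hP.mul hG
      rw [e1, e2] at h
      exact h
    have hd : HasDerivAt (fun x : ℝ => 1 + β * x ^ ((n:ℝ)-1) * Gam1 n x)
        (β * (c * A * G + 1)) r := by
      have h := (hmul.const_mul β).const_add 1
      have hfe : (fun x : ℝ => 1 + β * x ^ ((n:ℝ)-1) * Gam1 n x)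
          = fun x : ℝ => 1 + β * (x ^ ((n:ℝ)-1) * Gam1 n x) := by
        funext x; ring
      rw [hfe]; exact h
    set d : ℝ := 1 + β * r ^ ((n:ℝ)-1) * Gam1 n r with hddef
    have hdr : 0 < d := hd_pos r hr
    have hu : HasDerivAt (fun x : ℝ => c/x - β) (-(c * (r^2)⁻¹)) r := by
      have h := ((hasDerivAt_inv hrne).const_mul c).sub_const β
      have hfe : (fun x : ℝ => c/x - β) = fun x : ℝ => c * x⁻¹ - β := by
        funext x; rw [div_eq_mul_inv]
      rw [hfe, show -(c * (r^2)⁻¹) = c * -(r^2)⁻¹ by ring]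
      exact h
    have hv : HasDerivAt (fun x : ℝ => (1 + β * x ^ ((n:ℝ)-1) * Gam1 n x) ^ 2)
        (2 * d * (β * (c * A * G + 1))) r := by
      have h := hd.pow 2
      norm_num at h
      exact h
    have hdiv := hu.div hv (pow_ne_zero 2 (ne_of_gt hdr))
    rw [hfun]
    refine ⟨_, ?_, hdiv⟩
    have hdrw : d = 1 + β * (A * r) * G := by rw [hddef, ePA]
    have h1 : c / r ≤ c := div_le_self hc0 hr
    have hr2 : (1:ℝ) ≤ r^2 := by nlinarith
    have h2 : c / r^2 ≤ c := div_le_self hc0 hr2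
    have h3 : (1:ℝ)/2 ≤ β - c/r := by linarith
    have hbag : 0 ≤ β * A * G := by positivity
    have s1 : (c/r) * (β*A*G) ≤ c * (β*A*G) := mul_le_mul_of_nonneg_right h1 hbag
    have s2 : c * (β*A*G) ≤ (2*(β - c/r)) * (c*(β*A*G)) :=
      le_mul_of_one_le_left (mul_nonneg hc0 hbag) (by linarith)
    have heq4 : (c/r^2) * (β*(A*r)*G) = (c/r) * (β*A*G) := by
      field_simp
    have hfact : -(c * (r^2)⁻¹) * d ^ 2 - (c/r - β) * (2 * d * (β * (c * A * G + 1)))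
        = d * ((2*(β - c/r)) * (β * (c*A*G + 1)) - (c/r^2) * d) := by
      ring
    have hN : 0 < (2*(β - c/r)) * (β * (c*A*G + 1)) - (c/r^2) * d := by
      rw [hdrw]
      nlinarith [s1, s2, heq4, h2, h3, hβ0, hβc, hc0]
    have hnum : 0 < -(c * (r^2)⁻¹) * d ^ 2 - (c/r - β) * (2 * d * (β * (c * A * G + 1))) := by
      rw [hfact]; exact mul_pos hdr hN
    have hden : (0:ℝ) < (d ^ 2) ^ 2 := by positivity
    exact div_pos hnum hden
  have hmono : StrictMonoOn (fun r : ℝ => -(β - c / r) * del1 n β r ^ 2) (Set.Ici 1) := by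
    apply strictMonoOn_of_deriv_pos (convex_Ici 1)
    · intro x hx
      obtain ⟨v, hv, hd⟩ := key x hx
      exact hd.continuousAt.continuousWithinAt
    · intro x hx
      rw [interior_Ici] at hx
      obtain ⟨v, hv, hd⟩ := key x (le_of_lt hx)
      rw [hd.deriv]; exact hv
  refine ⟨hmono, ?_⟩
  intro R hR hEq r hr
  have hR1 : (1:ℝ) ≤ R := hR
  have hr1 : (1:ℝ) ≤ r := hR1.trans hr
  have hfle : -(β - c / R) * del1 n β R ^ 2 ≤ -(β - c / r) * del1 n β r ^ 2 :=
    hmono.monotoneOn (Set.mem_Ici.mpr hR1) (Set.mem_Ici.mpr hr1) hr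
  have h2 := mul_le_mul_of_nonneg_left hfle hβ0.le
  have h1 : β * (-(β - c/R) * del1 n β R ^ 2) = -(γ^2) := by
    rw [← hEq]; ring
  have h3 : β * (-(β - c/r) * del1 n β r ^ 2)
      = -((β^2 - β*c/r) * del1 n β r ^ 2) := by ring
  linarith [h2, h1, h3]
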